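/- Let α ∈ (0,1), λ = (1−α)/(2α), and let G be the associated graph of unit vectors with pairwise inner products ±α (edges corresponding to inner product −α). Let X be an independent set in G and ∅ ≠ Y ⊊ X with |Y| = a, |X∖Y| = b, and ab > λ². Then the number of vertices outside X adjacent to every vertex of Y and to no vertex of X∖Y is at most λ²(a + b + 2λ)/(ab − λ²). -/

import Mathlib

open Finset
open scoped Classical RealInnerProductSpace

/-- cross inner product of block sums when all pairwise inner products are constant -/
lemma stmt18_cross {d N : ℕ} (v : Fin N → EuclideanSpace ℝ (Fin d))
    (s t : Finset (Fin N)) (c : ℝ) (h : ∀ i ∈ s, ∀ j ∈ t, ⟪v i, v j⟫ = c) :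
    ⟪∑ i ∈ s, v i, ∑ j ∈ t, v j⟫ = (s.card : ℝ) * t.card * c := by
  rw [sum_inner]
  have : ∀ i ∈ s, ⟪v i, ∑ j ∈ t, v j⟫ = (t.card : ℝ) * c := by
    intro i hi
    rw [inner_sum]
    rw [Finset.sum_congr rfl (fun j hj => h i hi j hj), Finset.sum_const, nsmul_eq_mul]
  rw [Finset.sum_congr rfl this, Finset.sum_const, nsmul_eq_mul]
  ring

/-- bound on the self inner product of a block sum -/
lemma stmt18_self {d N : ℕ} (v : Fin N → EuclideanSpace ℝ (Fin d)) (α : ℝ)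
    (s : Finset (Fin N)) (hunit : ∀ i, ‖v i‖ = 1)
    (h : ∀ i ∈ s, ∀ j ∈ s, i ≠ j → ⟪v i, v j⟫ ≤ α) :
    ⟪∑ i ∈ s, v i, ∑ j ∈ s, v j⟫ ≤ α * (s.card : ℝ) ^ 2 + (1 - α) * s.card := by
  rw [sum_inner]
  have key : ∀ i ∈ s, ⟪v i, ∑ j ∈ s, v j⟫ ≤ α * s.card + (1 - α) := by
    intro i hi
    rw [inner_sum]
    have hle : ∀ j ∈ s, ⟪v i, v j⟫ ≤ α + (if i = j then 1 - α else 0) := by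
      intro j hj
      by_cases hij : i = j
      · subst hij
        have : ⟪v i, v i⟫ = 1 := by
          rw [real_inner_self_eq_norm_sq, hunit i]; norm_num
        simp [this, hunit i]
      · simpa [hij] using h i hi j hj
    calc ∑ j ∈ s, ⟪v i, v j⟫ ≤ ∑ j ∈ s, (α + (if i = j then 1 - α else 0)) :=
          Finset.sum_le_sum hle
      _ = α * s.card + (1 - α) := by
          rw [Finset.sum_add_distrib, Finset.sum_const, Finset.sum_ite_eq, nsmul_eq_mul]
          simp [hi, mul_comm]
  calc ∑ i ∈ s, ⟪v i, ∑ j ∈ s, v j⟫ ≤ ∑ i ∈ s, (α * s.card + (1 - α)) :=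
        Finset.sum_le_sum key
    _ = α * (s.card : ℝ) ^ 2 + (1 - α) * s.card := by
        rw [Finset.sum_const, nsmul_eq_mul]; ring

set_option maxHeartbeats 1000000 in
/-- Let `λ = (1-α)/(2α)` and let unit vectors `v i` have pairwise inner products `±α`
(the associated graph joins `i ~ j` when `⟪v i, v j⟫ = -α`). If `X` is an independent set,
`∅ ≠ Y ⊊ X`, `|Y| = a`, `|X∖Y| = b` and `ab > λ²`, then the number of vertices outside `X`
adjacent to every vertex of `Y` and to no vertex of `X∖Y` is at most
`λ²(a + b + 2λ)/(ab - λ²)`. -/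
theorem stmt18 (α : ℝ) (hα : 0 < α) (hα1 : α < 1) (l : ℝ) (hl : l = (1 - α) / (2 * α))
    (d N : ℕ) (v : Fin N → EuclideanSpace ℝ (Fin d)) (hunit : ∀ i, ‖v i‖ = 1)
    (hpm : ∀ i j, i ≠ j → ⟪v i, v j⟫ = α ∨ ⟪v i, v j⟫ = -α)
    (X Y : Finset (Fin N)) (hYX : Y ⊆ X) (hY : Y.Nonempty) (hYne : Y ≠ X)
    (hindep : ∀ i ∈ X, ∀ j ∈ X, i ≠ j → ⟪v i, v j⟫ = α)
    (a b : ℕ) (ha : a = Y.card) (hb : b = (X \ Y).card) (hab : l ^ 2 < (a : ℝ) * b) :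
    ((Finset.univ.filter (fun i => i ∉ X ∧ (∀ j ∈ Y, ⟪v i, v j⟫ = -α) ∧
        (∀ j ∈ X \ Y, ⟪v i, v j⟫ = α))).card : ℝ) ≤
      l ^ 2 * ((a : ℝ) + b + 2 * l) / ((a : ℝ) * b - l ^ 2) := by
  set C : Finset (Fin N) := Finset.univ.filter (fun i => i ∉ X ∧ (∀ j ∈ Y, ⟪v i, v j⟫ = -α) ∧
        (∀ j ∈ X \ Y, ⟪v i, v j⟫ = α)) with hCdef
  set Z : Finset (Fin N) := X \ Y with hZdef
  set m : ℝ := (C.card : ℝ) with hm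
  have hl0 : 0 < l := by
    rw [hl]
    apply div_pos <;> linarith
  have hmemC : ∀ i ∈ C, i ∉ X ∧ (∀ j ∈ Y, ⟪v i, v j⟫ = -α) ∧
      (∀ j ∈ Z, ⟪v i, v j⟫ = α) := by
    intro i hi
    rw [hCdef, Finset.mem_filter] at hi
    exact hi.2
  -- block sums
  set S1 : EuclideanSpace ℝ (Fin d) := ∑ i ∈ C, v i with hS1
  set S2 : EuclideanSpace ℝ (Fin d) := ∑ i ∈ Y, v i with hS2
  set S3 : EuclideanSpace ℝ (Fin d) := ∑ i ∈ Z, v i with hS3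
  have h12 : ⟪S1, S2⟫ = m * a * (-α) := by
    rw [hS1, hS2, stmt18_cross v C Y (-α) (fun i hi j hj => (hmemC i hi).2.1 j hj), ha]
  have h13 : ⟪S1, S3⟫ = m * b * α := by
    rw [hS1, hS3, stmt18_cross v C Z α (fun i hi j hj => (hmemC i hi).2.2 j hj), hb]
  have h23 : ⟪S2, S3⟫ = (a : ℝ) * b * α := by
    rw [hS2, hS3, stmt18_cross v Y Z α ?_, ha, hb]
    intro i hi j hj
    have hjX : j ∈ X := (Finset.mem_sdiff.mp hj).1
    have hij : i ≠ j := by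
      intro h; exact (Finset.mem_sdiff.mp hj).2 (h ▸ hi)
    exact hindep i (hYX hi) j hjX hij
  have h11 : ⟪S1, S1⟫ ≤ α * m ^ 2 + (1 - α) * m := by
    rw [hS1]
    exact stmt18_self v α C hunit (fun i _ j _ hij => by
      rcases hpm i j hij with h | h
      · exact le_of_eq h
      · rw [h]; linarith)
  have h22 : ⟪S2, S2⟫ ≤ α * (a : ℝ) ^ 2 + (1 - α) * a := by
    rw [hS2, ha]
    exact stmt18_self v α Y hunit (fun i hi j hj hij =>
      le_of_eq (hindep i (hYX hi) j (hYX hj) hij))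
  have h33 : ⟪S3, S3⟫ ≤ α * (b : ℝ) ^ 2 + (1 - α) * b := by
    rw [hS3, hb]
    exact stmt18_self v α Z hunit (fun i hi j hj hij =>
      le_of_eq (hindep i (Finset.mem_sdiff.mp hi).1 j (Finset.mem_sdiff.mp hj).1 hij))
  -- the key quadratic inequality, for all real y z
  have key : ∀ y z : ℝ, 0 ≤ (m + a * y + b * z) ^ 2 + 2 * l * (m + a * y ^ 2 + b * z ^ 2)
      - 4 * m * a * y := by
    intro y z
    set u : EuclideanSpace ℝ (Fin d) := S1 + y • S2 + z • S3 with hu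
    have hnn : (0 : ℝ) ≤ ⟪u, u⟫ := real_inner_self_nonneg
    have hexp : ⟪u, u⟫ = ⟪S1, S1⟫ + y ^ 2 * ⟪S2, S2⟫ + z ^ 2 * ⟪S3, S3⟫
        + 2 * y * ⟪S1, S2⟫ + 2 * z * ⟪S1, S3⟫ + 2 * y * z * ⟪S2, S3⟫ := by
      rw [hu]
      simp only [inner_add_add_self, real_inner_smul_left, real_inner_smul_right,
        inner_add_left, inner_add_right]
      rw [real_inner_comm S2 S1, real_inner_comm S3 S1, real_inner_comm S3 S2]
      ring
    have hb1 : ⟪u, u⟫ ≤ (α * m ^ 2 + (1 - α) * m) + y ^ 2 * (α * (a : ℝ) ^ 2 + (1 - α) * a)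
        + z ^ 2 * (α * (b : ℝ) ^ 2 + (1 - α) * b)
        + 2 * y * (m * a * (-α)) + 2 * z * (m * b * α) + 2 * y * z * ((a : ℝ) * b * α) := by
      rw [hexp, h12, h13, h23]
      have t2 : y ^ 2 * ⟪S2, S2⟫ ≤ y ^ 2 * (α * (a : ℝ) ^ 2 + (1 - α) * a) :=
        mul_le_mul_of_nonneg_left h22 (sq_nonneg y)
      have t3 : z ^ 2 * ⟪S3, S3⟫ ≤ z ^ 2 * (α * (b : ℝ) ^ 2 + (1 - α) * b) :=
        mul_le_mul_of_nonneg_left h33 (sq_nonneg z)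
      linarith
    have hcomb : 0 ≤ α * (m + a * y + b * z) ^ 2 + (1 - α) * (m + a * y ^ 2 + b * z ^ 2)
        - 4 * α * m * a * y := by nlinarith [hnn, hb1]
    have h1ma : 1 - α = 2 * α * l := by
      rw [hl]; field_simp
    rw [h1ma] at hcomb
    have : 0 ≤ α * ((m + a * y + b * z) ^ 2 + 2 * l * (m + a * y ^ 2 + b * z ^ 2)
        - 4 * m * a * y) := by nlinarith [hcomb]
    nlinarith [this, hα]
  -- choose the optimal y and z
  have hD : 0 < l * ((a : ℝ) + b + 2 * l) := by
    have hab0 : (0:ℝ) ≤ (a : ℝ) := Nat.cast_nonneg a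
    have hbb0 : (0:ℝ) ≤ (b : ℝ) := Nat.cast_nonneg b
    have : 0 < (a : ℝ) + b + 2 * l := by linarith
    exact mul_pos hl0 this
  set D : ℝ := l * ((a : ℝ) + b + 2 * l) with hDdef
  have hkey := key (m * (b + l) / D) (-(m * (a + l)) / D)
  have hid : ((m + a * (m * (b + l) / D) + b * (-(m * (a + l)) / D)) ^ 2
      + 2 * l * (m + a * (m * (b + l) / D) ^ 2 + b * (-(m * (a + l)) / D) ^ 2)
      - 4 * m * a * (m * (b + l) / D)) * D
      = 2 * m * (l ^ 2 * ((a : ℝ) + b + 2 * l) - m * ((a : ℝ) * b - l ^ 2)) := by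
    have hD0 : D ≠ 0 := ne_of_gt hD
    field_simp
    ring
  have hmain : m * ((a : ℝ) * b - l ^ 2) ≤ l ^ 2 * ((a : ℝ) + b + 2 * l) := by
    have h0 : 0 ≤ 2 * m * (l ^ 2 * ((a : ℝ) + b + 2 * l) - m * ((a : ℝ) * b - l ^ 2)) := by
      rw [← hid]
      exact mul_nonneg hkey hD.le
    have hm0 : 0 ≤ m := Nat.cast_nonneg _
    have hP : 0 < l ^ 2 * ((a : ℝ) + b + 2 * l) := by
      have : 0 < (a : ℝ) + b + 2 * l := by
        have hab0 : (0:ℝ) ≤ (a : ℝ) := Nat.cast_nonneg a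
        have hbb0 : (0:ℝ) ≤ (b : ℝ) := Nat.cast_nonneg b
        linarith
      positivity
    nlinarith [h0, hm0, hP, hab, mul_nonneg hm0 hm0]
  rw [div_eq_mul_inv, ← div_eq_mul_inv, le_div_iff₀ (by linarith [hab])]
  exact hmain
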